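/- arXiv:2312.10653 — 8 statements merged into one kernel-verified Lean document; each statement's English description precedes it below -/
import Mathlib

section
/- Let 0 < β₁ ≤ β₂ ≤ β₃ < β₄ with β₁, β₂, β₃ ≤ 1, β₄ − β₃ < 1, |β₁ + β₃ − β₄| ≤ 1 and |β₂ + β₃ − β₄| ≤ 1. Let a, b, c ≤ 0 and d < 0 be real numbers and define Q(s) = s^{β₄} − a s^{β₃} − b s^{β₂} − c s^{β₁} − d (principal powers). Then Q has no zero s with Re(s) ≥ 0. -/
open Complex

theorem stmt_6 (β₁ β₂ β₃ β₄ : ℝ)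
    (h1 : 0 < β₁) (h12 : β₁ ≤ β₂) (h23 : β₂ ≤ β₃) (h34 : β₃ < β₄)
    (hb1 : β₁ ≤ 1) (hb2 : β₂ ≤ 1) (hb3 : β₃ ≤ 1)
    (h43 : β₄ - β₃ < 1)
    (h134 : |β₁ + β₃ - β₄| ≤ 1) (h234 : |β₂ + β₃ - β₄| ≤ 1)
    (a b c d : ℝ) (ha : a ≤ 0) (hb : b ≤ 0) (hc : c ≤ 0) (hd : d < 0)
    (s : ℂ) (hs : s ≠ 0) (hre : 0 ≤ s.re) :
    s ^ (β₄ : ℂ) - a * s ^ (β₃ : ℂ) - b * s ^ (β₂ : ℂ)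
      - c * s ^ (β₁ : ℂ) - d ≠ 0 := by
  intro hQ
  set θ := s.arg with hθdef
  set R := ‖s‖ with hRdef
  have hR : 0 < R := norm_pos_iff.mpr hs
  have habs : |θ| ≤ Real.pi / 2 := Complex.abs_arg_le_pi_div_two_iff.mpr hre
  have hpi : 0 < Real.pi / 2 := by positivity
  have key : ∀ γ : ℝ, ((s ^ (γ:ℂ)) * Complex.exp (-(β₃ * θ) * Complex.I)).re
      = R ^ γ * Real.cos ((γ - β₃) * θ) := by
    intro γ
    rw [Complex.cpow_def_of_ne_zero hs, ← Complex.exp_add, Complex.exp_re]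
    have h1 : (Complex.log s * γ + -(β₃ * θ) * Complex.I).re = Real.log R * γ := by
      simp [Complex.log_re, hRdef]
    have h2 : (Complex.log s * γ + -(β₃ * θ) * Complex.I).im = (γ - β₃) * θ := by
      simp [Complex.log_im, hθdef]; ring
    rw [h1, h2, Real.exp_mul, Real.exp_log hR]
  have hd' : (Complex.exp (-(β₃ * θ) * Complex.I)).re = Real.cos (β₃ * θ) := by
    have := key 0
    simp only [Complex.ofReal_zero, Complex.cpow_zero, one_mul] at this
    rw [this, Real.rpow_zero, one_mul, zero_sub, neg_mul, Real.cos_neg]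
  -- multiply hQ by the exponential and take real parts
  have h0 : ((s ^ (β₄:ℂ) - a * s ^ (β₃:ℂ) - b * s ^ (β₂:ℂ) - c * s ^ (β₁:ℂ) - d)
      * Complex.exp (-(β₃ * θ) * Complex.I)).re = 0 := by rw [hQ, zero_mul, Complex.zero_re]
  have hexp : R ^ β₄ * Real.cos ((β₄ - β₃) * θ)
      - a * (R ^ β₃ * Real.cos ((β₃ - β₃) * θ))
      - b * (R ^ β₂ * Real.cos ((β₂ - β₃) * θ))
      - c * (R ^ β₁ * Real.cos ((β₁ - β₃) * θ))
      - d * Real.cos (β₃ * θ) = 0 := by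
    rw [← key, ← key, ← key, ← key, ← hd']
    rw [← h0]
    simp only [sub_mul, mul_assoc, Complex.sub_re, Complex.re_ofReal_mul]
  rw [sub_self, zero_mul, Real.cos_zero, mul_one] at hexp
  -- bounds on the angles
  have hcos_bound : ∀ u : ℝ, 0 ≤ u → u ≤ 1 → 0 ≤ Real.cos (u * θ) := by
    intro u hu hu1
    apply Real.cos_nonneg_of_mem_Icc
    constructor
    · nlinarith [neg_abs_le θ, abs_nonneg θ]
    · nlinarith [le_abs_self θ, abs_nonneg θ]
  have hC4 : 0 < Real.cos ((β₄ - β₃) * θ) := by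
    apply Real.cos_pos_of_mem_Ioo
    constructor
    · nlinarith [neg_abs_le θ, abs_nonneg θ]
    · nlinarith [le_abs_self θ, abs_nonneg θ]
  have hC2 : 0 ≤ Real.cos ((β₂ - β₃) * θ) := by
    rw [show (β₂ - β₃) * θ = -((β₃ - β₂) * θ) by ring, Real.cos_neg]
    exact hcos_bound _ (by linarith) (by linarith)
  have hC1 : 0 ≤ Real.cos ((β₁ - β₃) * θ) := by
    rw [show (β₁ - β₃) * θ = -((β₃ - β₁) * θ) by ring, Real.cos_neg]
    exact hcos_bound _ (by linarith) (by linarith)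
  have hC0 : 0 ≤ Real.cos (β₃ * θ) := hcos_bound β₃ (by linarith) hb3
  have hR4 : 0 < R ^ β₄ := Real.rpow_pos_of_pos hR β₄
  have hR3 : 0 < R ^ β₃ := Real.rpow_pos_of_pos hR β₃
  have hR2 : 0 < R ^ β₂ := Real.rpow_pos_of_pos hR β₂
  have hR1 : 0 < R ^ β₁ := Real.rpow_pos_of_pos hR β₁
  linarith [mul_pos hR4 hC4, mul_nonneg hR3.le (neg_nonneg.mpr ha),
    mul_nonneg (mul_nonneg hR2.le hC2) (neg_nonneg.mpr hb),
    mul_nonneg (mul_nonneg hR1.le hC1) (neg_nonneg.mpr hc),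
    mul_nonneg hC0 (neg_nonneg.mpr hd.le)]
end

section
/- Let 0 < β₁ < β₂ < β₃ < β₄ < 2 and let a, b, c ≤ 0, d < 0 be real numbers. Define h₁(ω) = ω^{β₄} cos(β₄π/2) − a ω^{β₃} cos(β₃π/2) − b ω^{β₂} cos(β₂π/2) − c ω^{β₁} cos(β₁π/2) − d and h₂(ω) = ω^{β₄} sin(β₄π/2) − a ω^{β₃} sin(β₃π/2) − b ω^{β₂} sin(β₂π/2) − c ω^{β₁} sin(β₁π/2). Then for every ω > 0 with h₂(ω) = 0, we have h₁(ω) > 0. -/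
open Real

lemma sin_half_pos {x : ℝ} (hx : 0 < x) (hx2 : x < 2) : 0 < Real.sin (x * π / 2) := by
  apply Real.sin_pos_of_pos_of_lt_pi
  · positivity
  · have : x * π / 2 < 2 * π / 2 := by
      have := Real.pi_pos
      gcongr
    linarith

theorem stmt_10 (β₁ β₂ β₃ β₄ : ℝ)
    (h1 : 0 < β₁) (h12 : β₁ < β₂) (h23 : β₂ < β₃) (h34 : β₃ < β₄) (h4 : β₄ < 2)
    (a b c d : ℝ) (ha : a ≤ 0) (hb : b ≤ 0) (hc : c ≤ 0) (hd : d < 0)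
    (h₁ h₂ : ℝ → ℝ)
    (hh₁ : ∀ ω : ℝ, h₁ ω =
        ω ^ β₄ * Real.cos (β₄ * π / 2) - a * ω ^ β₃ * Real.cos (β₃ * π / 2)
          - b * ω ^ β₂ * Real.cos (β₂ * π / 2)
          - c * ω ^ β₁ * Real.cos (β₁ * π / 2) - d)
    (hh₂ : ∀ ω : ℝ, h₂ ω =
        ω ^ β₄ * Real.sin (β₄ * π / 2) - a * ω ^ β₃ * Real.sin (β₃ * π / 2)
          - b * ω ^ β₂ * Real.sin (β₂ * π / 2)
          - c * ω ^ β₁ * Real.sin (β₁ * π / 2)) :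
    ∀ ω : ℝ, 0 < ω → h₂ ω = 0 → 0 < h₁ ω := by
  intro ω hω hz
  rw [hh₂ ω] at hz
  rw [hh₁ ω]
  have s4 : 0 < Real.sin (β₄ * π / 2) := sin_half_pos (by linarith) h4
  have sd3 : 0 < Real.sin ((β₄ - β₃) * π / 2) := sin_half_pos (by linarith) (by linarith)
  have sd2 : 0 < Real.sin ((β₄ - β₂) * π / 2) := sin_half_pos (by linarith) (by linarith)
  have sd1 : 0 < Real.sin ((β₄ - β₁) * π / 2) := sin_half_pos (by linarith) (by linarith)
  have e3 : Real.sin ((β₄ - β₃) * π / 2) =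
      Real.sin (β₄ * π / 2) * Real.cos (β₃ * π / 2)
        - Real.cos (β₄ * π / 2) * Real.sin (β₃ * π / 2) := by
    rw [show (β₄ - β₃) * π / 2 = β₄ * π / 2 - β₃ * π / 2 by ring, Real.sin_sub]
  have e2 : Real.sin ((β₄ - β₂) * π / 2) =
      Real.sin (β₄ * π / 2) * Real.cos (β₂ * π / 2)
        - Real.cos (β₄ * π / 2) * Real.sin (β₂ * π / 2) := by
    rw [show (β₄ - β₂) * π / 2 = β₄ * π / 2 - β₂ * π / 2 by ring, Real.sin_sub]
  have e1 : Real.sin ((β₄ - β₁) * π / 2) =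
      Real.sin (β₄ * π / 2) * Real.cos (β₁ * π / 2)
        - Real.cos (β₄ * π / 2) * Real.sin (β₁ * π / 2) := by
    rw [show (β₄ - β₁) * π / 2 = β₄ * π / 2 - β₁ * π / 2 by ring, Real.sin_sub]
  have p3 : 0 < ω ^ β₃ := Real.rpow_pos_of_pos hω _
  have p2 : 0 < ω ^ β₂ := Real.rpow_pos_of_pos hω _
  have p1 : 0 < ω ^ β₁ := Real.rpow_pos_of_pos hω _
  have key : Real.sin (β₄ * π / 2) *
      (ω ^ β₄ * Real.cos (β₄ * π / 2) - a * ω ^ β₃ * Real.cos (β₃ * π / 2)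
          - b * ω ^ β₂ * Real.cos (β₂ * π / 2)
          - c * ω ^ β₁ * Real.cos (β₁ * π / 2) - d) =
      -a * ω ^ β₃ * Real.sin ((β₄ - β₃) * π / 2)
        - b * ω ^ β₂ * Real.sin ((β₄ - β₂) * π / 2)
        - c * ω ^ β₁ * Real.sin ((β₄ - β₁) * π / 2)
        - d * Real.sin (β₄ * π / 2) := by
    rw [e3, e2, e1]
    linear_combination Real.cos (β₄ * π / 2) * hz
  nlinarith [mul_nonneg (mul_nonneg (neg_nonneg.2 ha) p3.le) sd3.le,
    mul_nonneg (mul_nonneg (neg_nonneg.2 hb) p2.le) sd2.le,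
    mul_nonneg (mul_nonneg (neg_nonneg.2 hc) p1.le) sd1.le,
    mul_pos (neg_pos.2 hd) s4]
end

section
/- Let 0 < β₁ < β₄ < 2, c > 0, and d < −c ρ₁ (c ρ̃₁)^{β₁/(β₄−β₁)}, where ρ₁ = sin((β₄−β₁)π/2)/sin(β₄π/2) and ρ̃₁ = sin(β₁π/2)/sin(β₄π/2). Define h₁(ω) = ω^{β₄} cos(β₄π/2) − c ω^{β₁} cos(β₁π/2) − d and h₂(ω) = ω^{β₄} sin(β₄π/2) − c ω^{β₁} sin(β₁π/2). Then for every ω > 0 with h₂(ω) = 0, we have h₁(ω) > 0. -/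
open Real

theorem stmt_12 (β₁ β₄ : ℝ) (h1 : 0 < β₁) (h14 : β₁ < β₄) (h4 : β₄ < 2)
    (c d : ℝ) (hc : 0 < c)
    (ρ₁ ρt₁ : ℝ)
    (hρ₁ : ρ₁ = Real.sin ((β₄ - β₁) * π / 2) / Real.sin (β₄ * π / 2))
    (hρt₁ : ρt₁ = Real.sin (β₁ * π / 2) / Real.sin (β₄ * π / 2))
    (hd : d < - c * ρ₁ * (c * ρt₁) ^ (β₁ / (β₄ - β₁)))
    (h₁ h₂ : ℝ → ℝ)
    (hh₁ : ∀ ω : ℝ, h₁ ω =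
        ω ^ β₄ * Real.cos (β₄ * π / 2) - c * ω ^ β₁ * Real.cos (β₁ * π / 2) - d)
    (hh₂ : ∀ ω : ℝ, h₂ ω =
        ω ^ β₄ * Real.sin (β₄ * π / 2) - c * ω ^ β₁ * Real.sin (β₁ * π / 2)) :
    ∀ ω : ℝ, 0 < ω → h₂ ω = 0 → 0 < h₁ ω := by
  intro ω hω hzero
  have hπ := Real.pi_pos
  have hs4 : 0 < Real.sin (β₄ * π / 2) := by
    apply Real.sin_pos_of_pos_of_lt_pi <;> nlinarith
  have hs1 : 0 < Real.sin (β₁ * π / 2) := by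
    apply Real.sin_pos_of_pos_of_lt_pi <;> nlinarith
  have hω1 : (0:ℝ) < ω ^ β₁ := Real.rpow_pos_of_pos hω β₁
  have hω4 : (0:ℝ) < ω ^ β₄ := Real.rpow_pos_of_pos hω β₄
  rw [hh₂] at hzero
  have heq : ω ^ β₄ = c * ω ^ β₁ * ρt₁ := by
    rw [hρt₁]
    rw [mul_div_assoc', eq_div_iff hs4.ne']
    nlinarith [hzero]
  have hdiff : ω ^ (β₄ - β₁) = c * ρt₁ := by
    rw [Real.rpow_sub hω, heq]
    field_simp
  have hne : β₄ - β₁ ≠ 0 := by linarith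
  have hmul : (β₄ - β₁) * (β₁ / (β₄ - β₁)) = β₁ := by field_simp
  have hωb1 : ω ^ β₁ = (c * ρt₁) ^ (β₁ / (β₄ - β₁)) := by
    rw [← hdiff, ← Real.rpow_mul hω.le, hmul]
  have key : ρt₁ * Real.cos (β₄ * π / 2) - Real.cos (β₁ * π / 2) = -ρ₁ := by
    rw [hρt₁, hρ₁]
    have hsub : (β₄ - β₁) * π / 2 = β₄ * π / 2 - β₁ * π / 2 := by ring
    rw [hsub, Real.sin_sub]
    generalize Real.sin (β₄ * π / 2) = s at hs4 ⊢
    field_simp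
    ring
  rw [hh₁, heq]
  have hfin : c * ω ^ β₁ * ρt₁ * Real.cos (β₄ * π / 2) - c * ω ^ β₁ * Real.cos (β₁ * π / 2) - d
      = -c * ρ₁ * (c * ρt₁) ^ (β₁ / (β₄ - β₁)) - d := by
    rw [hωb1]
    linear_combination (c * (c * ρt₁) ^ (β₁ / (β₄ - β₁))) * key
  linarith [hfin, hd]
end

section
/- Let 0 < β₁ < β₂ < β₄ < 2 and b, c > 0. Define g(ω) = β₄ ω^{β₄−β₁} sin(β₄π/2) − b β₂ ω^{β₂−β₁} sin(β₂π/2) − c β₁ sin(β₁π/2) for ω > 0. Then g has exactly one zero in (0, ∞). -/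
open Real Filter Set

theorem stmt_13 (β₁ β₂ β₄ : ℝ) (h1 : 0 < β₁) (h12 : β₁ < β₂) (h24 : β₂ < β₄)
    (h4 : β₄ < 2) (b c : ℝ) (hb : 0 < b) (hc : 0 < c)
    (g : ℝ → ℝ)
    (hg : ∀ ω : ℝ, g ω =
        β₄ * ω ^ (β₄ - β₁) * Real.sin (β₄ * π / 2)
          - b * β₂ * ω ^ (β₂ - β₁) * Real.sin (β₂ * π / 2)
          - c * β₁ * Real.sin (β₁ * π / 2)) :
    ∃! ω : ℝ, ω ∈ Set.Ioi (0:ℝ) ∧ g ω = 0 := by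
  have hpi : (0:ℝ) < π := Real.pi_pos
  have hsin : ∀ β : ℝ, 0 < β → β < 2 → 0 < Real.sin (β * π / 2) := by
    intro β hβ hβ2
    apply Real.sin_pos_of_pos_of_lt_pi
    · positivity
    · rw [div_lt_iff₀ (by norm_num), mul_comm π 2]
      exact mul_lt_mul_of_pos_right hβ2 hpi |>.trans_eq rfl
  have h2 : 0 < β₂ := h1.trans h12
  have h04 : 0 < β₄ := h2.trans h24
  set A := β₄ * Real.sin (β₄ * π / 2) with hA
  set K := b * β₂ * Real.sin (β₂ * π / 2) with hK
  set C := c * β₁ * Real.sin (β₁ * π / 2) with hC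
  have hApos : 0 < A := mul_pos h04 (hsin _ h04 h4)
  have hKpos : 0 < K := mul_pos (mul_pos hb h2) (hsin _ h2 (h24.trans h4))
  have hCpos : 0 < C := mul_pos (mul_pos hc h1) (hsin _ h1 (h12.trans (h24.trans h4)))
  set e1 := β₄ - β₂ with he1
  set e3 := β₁ - β₂ with he3
  have he1pos : 0 < e1 := sub_pos.mpr h24
  have he3neg : e3 < 0 := sub_neg.mpr h12
  set h : ℝ → ℝ := fun x => A * x ^ e1 - K - C * x ^ e3 with hh
  -- g x = x^(β₂-β₁) * h x for x > 0
  have hgh : ∀ x : ℝ, 0 < x → g x = x ^ (β₂ - β₁) * h x := by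
    intro x hx
    rw [hg, hh]
    simp only
    have h1' : x ^ (β₂ - β₁) * x ^ e1 = x ^ (β₄ - β₁) := by
      rw [← Real.rpow_add hx, he1]; ring_nf
    have h3' : x ^ (β₂ - β₁) * x ^ e3 = 1 := by
      rw [← Real.rpow_add hx]
      norm_num [he3]
    rw [mul_sub, mul_sub]
    rw [show x ^ (β₂ - β₁) * (A * x ^ e1) = A * (x ^ (β₂ - β₁) * x ^ e1) by ring, h1',
      show x ^ (β₂ - β₁) * (C * x ^ e3) = C * (x ^ (β₂ - β₁) * x ^ e3) by ring, h3']
    ring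
  have hzero : ∀ x : ℝ, 0 < x → (g x = 0 ↔ h x = 0) := by
    intro x hx
    rw [hgh x hx]
    constructor
    · intro H
      rcases mul_eq_zero.mp H with H' | H'
      · exact absurd H' (ne_of_gt (Real.rpow_pos_of_pos hx _))
      · exact H'
    · intro H; rw [H, mul_zero]
  -- h strictly monotone on Ioi 0
  have hmono : StrictMonoOn h (Set.Ioi (0:ℝ)) := by
    intro x hx y hy hxy
    simp only [hh]
    have t1 : A * x ^ e1 < A * y ^ e1 :=
      mul_lt_mul_of_pos_left (Real.rpow_lt_rpow (le_of_lt hx) hxy he1pos) hApos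
    have t3 : C * y ^ e3 < C * x ^ e3 :=
      mul_lt_mul_of_pos_left (Real.rpow_lt_rpow_of_neg hx hxy he3neg) hCpos
    linarith
  -- continuity on Ioi 0
  have hcont : ContinuousOn h (Set.Ioi (0:ℝ)) := by
    apply ContinuousOn.sub
    apply ContinuousOn.sub
    · exact continuousOn_const.mul (fun x hx =>
        (Real.continuousAt_rpow_const x e1 (Or.inl (ne_of_gt hx))).continuousWithinAt)
    · exact continuousOn_const
    · exact continuousOn_const.mul (fun x hx =>
        (Real.continuousAt_rpow_const x e3 (Or.inl (ne_of_gt hx))).continuousWithinAt)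
  -- h → atTop at atTop
  have htop : Tendsto h atTop atTop := by
    have t1 : Tendsto (fun x : ℝ => A * x ^ e1 - K) atTop atTop :=
      tendsto_atTop_add_const_right _ (-K)
        ((tendsto_rpow_atTop he1pos).const_mul_atTop hApos) |>.congr (by intro x; ring_nf)
    have t3 : Tendsto (fun x : ℝ => -(C * x ^ e3)) atTop (nhds 0) := by
      have := (tendsto_rpow_neg_atTop (y := β₂ - β₁) (by linarith)).const_mul (-C)
      simp only [mul_zero] at this
      convert this using 2 with x
      rw [he3, show β₁ - β₂ = -(β₂ - β₁) by ring]
      ring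
    have := t3.add_atTop t1
    refine this.congr (fun x => by simp [hh]; ring)
  -- h → atBot at 0+
  have hbot : Tendsto h (nhdsWithin 0 (Set.Ioi (0:ℝ))) atBot := by
    have t1 : Tendsto (fun x : ℝ => A * x ^ e1 - K) (nhdsWithin 0 (Set.Ioi (0:ℝ))) (nhds (-K)) := by
      have : Tendsto (fun x : ℝ => x ^ e1) (nhdsWithin 0 (Set.Ioi (0:ℝ))) (nhds 0) := by
        have := (Real.continuousAt_rpow_const 0 e1 (Or.inr he1pos.le)).continuousWithinAt
          (s := Set.Ioi (0:ℝ))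
        simpa [ContinuousWithinAt, Real.zero_rpow (ne_of_gt he1pos)] using this
      have := (this.const_mul A).sub_const K
      simpa using this
    have t3 : Tendsto (fun x : ℝ => x ^ e3) (nhdsWithin 0 (Set.Ioi (0:ℝ))) atTop := by
      have hinv : Tendsto (fun x : ℝ => x⁻¹) (nhdsWithin 0 (Set.Ioi (0:ℝ))) atTop :=
        tendsto_inv_nhdsGT_zero
      have hpow : Tendsto (fun x : ℝ => (x ^ (β₂ - β₁))⁻¹) (nhdsWithin 0 (Set.Ioi (0:ℝ)))
          atTop := by
        apply hinv.comp
        rw [tendsto_nhdsWithin_iff]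
        constructor
        · have := (Real.continuousAt_rpow_const 0 (β₂ - β₁)
            (Or.inr (by linarith))).continuousWithinAt (s := Set.Ioi (0:ℝ))
          simpa [ContinuousWithinAt, Real.zero_rpow (show β₂ - β₁ ≠ 0 by linarith)] using this
        · filter_upwards [self_mem_nhdsWithin] with x hx
          exact Real.rpow_pos_of_pos hx _
      refine hpow.congr' ?_
      filter_upwards [self_mem_nhdsWithin] with x hx
      rw [← Real.rpow_neg (le_of_lt hx), he3]; ring_nf
    have t3' : Tendsto (fun x : ℝ => -(C * x ^ e3)) (nhdsWithin 0 (Set.Ioi (0:ℝ))) atBot := by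
      have := t3.const_mul_atTop hCpos
      exact tendsto_neg_atBot_iff.mpr this
    have := t1.add_atBot t3'
    refine this.congr (fun x => by simp [hh]; ring)
  -- find points where h < 0 and h > 0
  obtain ⟨x₀, hx₀pos, hx₀neg⟩ : ∃ x : ℝ, 0 < x ∧ h x < 0 := by
    have : ∀ᶠ x in nhdsWithin 0 (Set.Ioi (0:ℝ)), h x < 0 :=
      hbot.eventually (eventually_lt_atBot 0)
    rcases (this.and self_mem_nhdsWithin).exists with ⟨x, hx1, hx2⟩
    exact ⟨x, hx2, hx1⟩
  obtain ⟨x₁, hx₁pos⟩ : ∃ x : ℝ, x₀ < x ∧ 0 < h x := by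
    have : ∀ᶠ x in atTop, x₀ < x ∧ 0 < h x :=
      (eventually_gt_atTop x₀).and (htop.eventually (eventually_gt_atTop 0))
    exact this.exists
  obtain ⟨hx01, hx₁posval⟩ := hx₁pos
  have hx₁pos' : 0 < x₁ := hx₀pos.trans hx01
  have hsub : Set.Icc x₀ x₁ ⊆ Set.Ioi (0:ℝ) := fun z hz => lt_of_lt_of_le hx₀pos hz.1
  obtain ⟨ω, hωmem, hωzero⟩ : ∃ ω ∈ Set.Icc x₀ x₁, h ω = 0 := by
    have := intermediate_value_Icc (le_of_lt hx01) (hcont.mono hsub)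
    exact this ⟨le_of_lt hx₀neg, le_of_lt hx₁posval⟩
  have hωpos : 0 < ω := hsub hωmem
  refine ⟨ω, ⟨hωpos, (hzero ω hωpos).mpr hωzero⟩, ?_⟩
  rintro y ⟨hy, hgy⟩
  have hy' : h y = 0 := (hzero y hy).mp hgy
  exact hmono.injOn hy hωpos (by rw [hy', hωzero])
end

section
/- Let 0 < β₁ < β₂ < β₄ < 2, b > 0, c > 0, and suppose b ρ̃₂ + c ρ̃₁ > 1, where ρ̃_i = sin(β_iπ/2)/sin(β₄π/2). Define h₂(ω) = ω^{β₄} sin(β₄π/2) − b ω^{β₂} sin(β₂π/2) − c ω^{β₁} sin(β₁π/2). Then h₂ has exactly one zero ω₀ in (0, ∞), and 1 < ω₀ < (b ρ̃₂ + c ρ̃₁)^{1/(β₄−β₂)}. -/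
open Real

theorem stmt_14 (β₁ β₂ β₄ : ℝ) (h1 : 0 < β₁) (h12 : β₁ < β₂) (h24 : β₂ < β₄)
    (h4 : β₄ < 2) (b c : ℝ) (hb : 0 < b) (hc : 0 < c)
    (ρt₁ ρt₂ : ℝ)
    (hρt₁ : ρt₁ = Real.sin (β₁ * π / 2) / Real.sin (β₄ * π / 2))
    (hρt₂ : ρt₂ = Real.sin (β₂ * π / 2) / Real.sin (β₄ * π / 2))
    (hgt : 1 < b * ρt₂ + c * ρt₁)
    (h₂ : ℝ → ℝ)
    (hh₂ : ∀ ω : ℝ, h₂ ω =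
        ω ^ β₄ * Real.sin (β₄ * π / 2) - b * ω ^ β₂ * Real.sin (β₂ * π / 2)
          - c * ω ^ β₁ * Real.sin (β₁ * π / 2)) :
    ∃ ω₀ : ℝ, (0 < ω₀ ∧ h₂ ω₀ = 0) ∧
      (∀ ω : ℝ, 0 < ω → h₂ ω = 0 → ω = ω₀) ∧
      1 < ω₀ ∧ ω₀ < (b * ρt₂ + c * ρt₁) ^ (1 / (β₄ - β₂)) := by
  have hπ := Real.pi_pos
  have hs : ∀ β : ℝ, 0 < β → β < 2 → 0 < Real.sin (β * π / 2) := by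
    intro β hβ hβ2
    apply Real.sin_pos_of_pos_of_lt_pi
    · positivity
    · nlinarith
  have hs₁ := hs β₁ h1 (by linarith)
  have hs₂ := hs β₂ (by linarith) (by linarith)
  have hs₄ := hs β₄ (by linarith) h4
  set s₁ := Real.sin (β₁ * π / 2) with hs₁def
  set s₂ := Real.sin (β₂ * π / 2) with hs₂def
  set s₄ := Real.sin (β₄ * π / 2) with hs₄def
  set K := b * ρt₂ + c * ρt₁ with hKdef
  have hK : 0 < K := by linarith
  have hKS : s₄ * K = b * s₂ + c * s₁ := by
    rw [hKdef, hρt₁, hρt₂]; field_simp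
  have hd : 0 < β₄ - β₂ := by linarith
  set M := K ^ (1 / (β₄ - β₂)) with hMdef
  have hM1 : 1 < M := by
    exact (Real.one_lt_rpow_iff_of_pos hK).mpr (Or.inl ⟨hgt, one_div_pos.mpr hd⟩)
  have hMpos : 0 < M := by linarith
  have hMd : M ^ (β₄ - β₂) = K := by
    rw [hMdef, ← Real.rpow_mul hK.le, one_div, inv_mul_cancel₀ hd.ne', Real.rpow_one]
  -- h₂ at 1 is negative
  have h1neg : h₂ 1 < 0 := by
    rw [hh₂]; simp only [Real.one_rpow]
    nlinarith
  -- h₂ at M is positive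
  have hMb4 : M ^ β₄ = M ^ β₂ * K := by
    rw [← hMd, ← Real.rpow_add hMpos]; ring_nf
  have hM12 : M ^ β₁ < M ^ β₂ := Real.rpow_lt_rpow_of_exponent_lt hM1 h12
  have hM2pos : 0 < M ^ β₂ := Real.rpow_pos_of_pos hMpos β₂
  have hMposval : 0 < h₂ M := by
    rw [hh₂, hMb4]
    have hKS2 : M ^ β₂ * (s₄ * K) = M ^ β₂ * (b * s₂ + c * s₁) := by rw [hKS]
    nlinarith [mul_lt_mul_of_pos_left hM12 (mul_pos hc hs₁)]
  -- continuity on [1, M]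
  have hcont : ContinuousOn h₂ (Set.Icc 1 M) := by
    have heq : ∀ x ∈ Set.Icc (1:ℝ) M, h₂ x =
        (fun ω : ℝ => ω ^ β₄ * s₄ - b * ω ^ β₂ * s₂ - c * ω ^ β₁ * s₁) x :=
      fun x _ => hh₂ x
    apply ContinuousOn.congr _ heq
    have hrp : ∀ β : ℝ, ContinuousOn (fun ω : ℝ => ω ^ β) (Set.Icc 1 M) := by
      intro β x hx
      have hx0 : x ≠ 0 := by
        have := hx.1; intro h; rw [h] at this; linarith
      exact (Real.continuousAt_rpow_const x β (Or.inl hx0)).continuousWithinAt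
    exact (((hrp β₄).mul continuousOn_const).sub
      ((continuousOn_const.mul (hrp β₂)).mul continuousOn_const)).sub
      ((continuousOn_const.mul (hrp β₁)).mul continuousOn_const)
  have hsub := intermediate_value_Ioo (le_of_lt hM1) hcont
  have h0mem : (0:ℝ) ∈ Set.Ioo (h₂ 1) (h₂ M) := ⟨h1neg, hMposval⟩
  obtain ⟨ω₀, hω₀mem, hω₀zero⟩ := hsub h0mem
  have hω₀pos : 0 < ω₀ := by linarith [hω₀mem.1]
  -- factorization
  have hg : ∀ ω : ℝ, 0 < ω → h₂ ω =
      ω ^ β₄ * (s₄ - b * s₂ * ω ^ (β₂ - β₄) - c * s₁ * ω ^ (β₁ - β₄)) := by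
    intro ω hω
    have e2 : ω ^ β₄ * ω ^ (β₂ - β₄) = ω ^ β₂ := by
      rw [← Real.rpow_add hω]; ring_nf
    have e1 : ω ^ β₄ * ω ^ (β₁ - β₄) = ω ^ β₁ := by
      rw [← Real.rpow_add hω]; ring_nf
    rw [hh₂, ← e2, ← e1]; ring
  -- strict monotonicity of the factor g
  have hgmono : ∀ x y : ℝ, 0 < x → x < y →
      (s₄ - b * s₂ * x ^ (β₂ - β₄) - c * s₁ * x ^ (β₁ - β₄)) <
      (s₄ - b * s₂ * y ^ (β₂ - β₄) - c * s₁ * y ^ (β₁ - β₄)) := by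
    intro x y hx hxy
    have l2 : y ^ (β₂ - β₄) < x ^ (β₂ - β₄) :=
      Real.rpow_lt_rpow_of_neg hx hxy (by linarith)
    have l1 : y ^ (β₁ - β₄) < x ^ (β₁ - β₄) :=
      Real.rpow_lt_rpow_of_neg hx hxy (by linarith)
    nlinarith [mul_lt_mul_of_pos_left l2 (mul_pos hb hs₂),
      mul_lt_mul_of_pos_left l1 (mul_pos hc hs₁)]
  have hzero_g : ∀ ω : ℝ, 0 < ω → h₂ ω = 0 →
      s₄ - b * s₂ * ω ^ (β₂ - β₄) - c * s₁ * ω ^ (β₁ - β₄) = 0 := by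
    intro ω hω h0
    have := hg ω hω
    rw [h0] at this
    have hpos : (0:ℝ) < ω ^ β₄ := Real.rpow_pos_of_pos hω β₄
    have := this.symm
    rcases mul_eq_zero.mp this with h | h
    · exact absurd h hpos.ne'
    · exact h
  refine ⟨ω₀, ⟨hω₀pos, hω₀zero⟩, ?_, hω₀mem.1, hω₀mem.2⟩
  intro ω hω h0
  have g1 := hzero_g ω hω h0
  have g2 := hzero_g ω₀ hω₀pos hω₀zero
  rcases lt_trichotomy ω ω₀ with h | h | h
  · have := hgmono ω ω₀ hω h; rw [g1, g2] at this; exact absurd this (lt_irrefl 0)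
  · exact h
  · have := hgmono ω₀ ω hω₀pos h; rw [g1, g2] at this; exact absurd this (lt_irrefl 0)
end

section
/- Let 0 < β₁ < β₂ < β₄ < 2, b > 0, c > 0, with b ρ̃₂ + c ρ̃₁ > 1 and d ≤ −b (b ρ̃₂ + c ρ̃₁)^{β₂/(β₄−β₂)} ρ₂ − c (b ρ̃₂ + c ρ̃₁)^{β₁/(β₄−β₂)} ρ₁, where ρ_i = sin((β₄−β_i)π/2)/sin(β₄π/2) and ρ̃_i = sin(β_iπ/2)/sin(β₄π/2). Define h₁(ω) = ω^{β₄} cos(β₄π/2) − b ω^{β₂} cos(β₂π/2) − c ω^{β₁} cos(β₁π/2) − d and h₂(ω) = ω^{β₄} sin(β₄π/2) − b ω^{β₂} sin(β₂π/2) − c ω^{β₁} sin(β₁π/2). Then for every ω > 0 with h₂(ω) = 0, we have h₁(ω) > 0. -/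
open Real

set_option maxHeartbeats 1000000 in
theorem stmt_15 (β₁ β₂ β₄ : ℝ) (h1 : 0 < β₁) (h12 : β₁ < β₂) (h24 : β₂ < β₄)
    (h4 : β₄ < 2) (b c d : ℝ) (hb : 0 < b) (hc : 0 < c)
    (ρ₁ ρ₂ ρt₁ ρt₂ : ℝ)
    (hρ₁ : ρ₁ = Real.sin ((β₄ - β₁) * π / 2) / Real.sin (β₄ * π / 2))
    (hρ₂ : ρ₂ = Real.sin ((β₄ - β₂) * π / 2) / Real.sin (β₄ * π / 2))
    (hρt₁ : ρt₁ = Real.sin (β₁ * π / 2) / Real.sin (β₄ * π / 2))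
    (hρt₂ : ρt₂ = Real.sin (β₂ * π / 2) / Real.sin (β₄ * π / 2))
    (hgt : 1 < b * ρt₂ + c * ρt₁)
    (hd : d ≤ - b * (b * ρt₂ + c * ρt₁) ^ (β₂ / (β₄ - β₂)) * ρ₂
            - c * (b * ρt₂ + c * ρt₁) ^ (β₁ / (β₄ - β₂)) * ρ₁)
    (h₁ h₂ : ℝ → ℝ)
    (hh₁ : ∀ ω : ℝ, h₁ ω =
        ω ^ β₄ * Real.cos (β₄ * π / 2) - b * ω ^ β₂ * Real.cos (β₂ * π / 2)
          - c * ω ^ β₁ * Real.cos (β₁ * π / 2) - d)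
    (hh₂ : ∀ ω : ℝ, h₂ ω =
        ω ^ β₄ * Real.sin (β₄ * π / 2) - b * ω ^ β₂ * Real.sin (β₂ * π / 2)
          - c * ω ^ β₁ * Real.sin (β₁ * π / 2)) :
    ∀ ω : ℝ, 0 < ω → h₂ ω = 0 → 0 < h₁ ω := by
  intro ω hω hz
  have hπ := Real.pi_pos
  have h2pos : 0 < β₂ := h1.trans h12
  have h4pos : 0 < β₄ := h2pos.trans h24
  have hs4 : 0 < Real.sin (β₄ * π / 2) := by
    apply Real.sin_pos_of_pos_of_lt_pi <;> nlinarith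
  have hs1 : 0 < Real.sin (β₁ * π / 2) := by
    apply Real.sin_pos_of_pos_of_lt_pi <;> nlinarith
  have hs2 : 0 < Real.sin (β₂ * π / 2) := by
    apply Real.sin_pos_of_pos_of_lt_pi <;> nlinarith
  have hsd1 : 0 < Real.sin ((β₄ - β₁) * π / 2) := by
    apply Real.sin_pos_of_pos_of_lt_pi <;> nlinarith
  have hsd2 : 0 < Real.sin ((β₄ - β₂) * π / 2) := by
    apply Real.sin_pos_of_pos_of_lt_pi <;> nlinarith
  have hρ₁pos : 0 < ρ₁ := by rw [hρ₁]; exact div_pos hsd1 hs4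
  have hρ₂pos : 0 < ρ₂ := by rw [hρ₂]; exact div_pos hsd2 hs4
  have hρt₁pos : 0 < ρt₁ := by rw [hρt₁]; exact div_pos hs1 hs4
  have hρt₂pos : 0 < ρt₂ := by rw [hρt₂]; exact div_pos hs2 hs4
  have hzeq : ω ^ β₄ * Real.sin (β₄ * π / 2)
      = b * ω ^ β₂ * Real.sin (β₂ * π / 2) + c * ω ^ β₁ * Real.sin (β₁ * π / 2) := by
    have := hh₂ ω; rw [hz] at this; linarith
  have e1 : Real.sin ((β₄ - β₁) * π / 2)
      = Real.sin (β₄ * π / 2) * Real.cos (β₁ * π / 2)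
        - Real.cos (β₄ * π / 2) * Real.sin (β₁ * π / 2) := by
    rw [show (β₄ - β₁) * π / 2 = β₄ * π / 2 - β₁ * π / 2 by ring, Real.sin_sub]
  have e2 : Real.sin ((β₄ - β₂) * π / 2)
      = Real.sin (β₄ * π / 2) * Real.cos (β₂ * π / 2)
        - Real.cos (β₄ * π / 2) * Real.sin (β₂ * π / 2) := by
    rw [show (β₄ - β₂) * π / 2 = β₄ * π / 2 - β₂ * π / 2 by ring, Real.sin_sub]
  have key0 : h₁ ω * Real.sin (β₄ * π / 2)
      = -(b * ω ^ β₂ * Real.sin ((β₄ - β₂) * π / 2))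
        - c * ω ^ β₁ * Real.sin ((β₄ - β₁) * π / 2)
        - d * Real.sin (β₄ * π / 2) := by
    rw [hh₁, e1, e2]
    linear_combination Real.cos (β₄ * π / 2) * hzeq
  have key : h₁ ω = -(b * ω ^ β₂ * ρ₂) - c * ω ^ β₁ * ρ₁ - d := by
    have key1 : h₁ ω = (-(b * ω ^ β₂ * Real.sin ((β₄ - β₂) * π / 2))
        - c * ω ^ β₁ * Real.sin ((β₄ - β₁) * π / 2)
        - d * Real.sin (β₄ * π / 2)) / Real.sin (β₄ * π / 2) := by
      rw [eq_div_iff hs4.ne']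
      linear_combination key0
    rw [key1, hρ₁, hρ₂]
    field_simp
  -- bound ω < M
  set A := b * ρt₂ + c * ρt₁ with hA
  have hApos : (0:ℝ) < A := lt_trans one_pos hgt
  have hden : (0:ℝ) < β₄ - β₂ := by linarith
  set M := A ^ (1 / (β₄ - β₂)) with hM
  have hM1 : (1:ℝ) < M := Real.one_lt_rpow_iff_of_pos hApos |>.mpr (Or.inl ⟨hgt, by positivity⟩)
  have hωM : ω < M := by
    rcases le_or_gt ω 1 with hle | hgt1
    · exact lt_of_le_of_lt hle hM1
    · have h12' : ω ^ β₁ < ω ^ β₂ := Real.rpow_lt_rpow_left_iff hgt1 |>.mpr h12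
      have hω2pos : (0:ℝ) < ω ^ β₂ := Real.rpow_pos_of_pos hω _
      have hωeq : ω ^ β₄ = b * ρt₂ * ω ^ β₂ + c * ρt₁ * ω ^ β₁ := by
        have h' : ω ^ β₄ = (b * ω ^ β₂ * Real.sin (β₂ * π / 2)
            + c * ω ^ β₁ * Real.sin (β₁ * π / 2)) / Real.sin (β₄ * π / 2) := by
          rw [eq_div_iff hs4.ne']
          linear_combination hzeq
        rw [h', hρt₂, hρt₁]
        ring
      have hlt : ω ^ β₄ < A * ω ^ β₂ := by
        rw [hωeq, hA, add_mul]
        have := mul_lt_mul_of_pos_left h12' (mul_pos hc hρt₁pos)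
        linarith [this]
      have hsplit : ω ^ β₄ = ω ^ β₂ * ω ^ (β₄ - β₂) := by
        rw [← Real.rpow_add hω]; ring_nf
      have hlt2 : ω ^ (β₄ - β₂) < A := by
        rw [hsplit] at hlt
        have h' : ω ^ β₂ * ω ^ (β₄ - β₂) < ω ^ β₂ * A := by linarith [hlt]
        exact lt_of_mul_lt_mul_left h' hω2pos.le
      calc ω = (ω ^ (β₄ - β₂)) ^ (1 / (β₄ - β₂)) := by
              rw [← Real.rpow_mul hω.le]
              rw [mul_one_div, div_self hden.ne', Real.rpow_one]
        _ < M := Real.rpow_lt_rpow (Real.rpow_nonneg hω.le _) hlt2 (by positivity)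
  have hMb2 : M ^ β₂ = A ^ (β₂ / (β₄ - β₂)) := by
    rw [hM, ← Real.rpow_mul hApos.le, one_div, inv_mul_eq_div]
  have hMb1 : M ^ β₁ = A ^ (β₁ / (β₄ - β₂)) := by
    rw [hM, ← Real.rpow_mul hApos.le, one_div, inv_mul_eq_div]
  have hd' : d ≤ -b * M ^ β₂ * ρ₂ - c * M ^ β₁ * ρ₁ := by rw [hMb2, hMb1]; exact hd
  have hlt2 : ω ^ β₂ < M ^ β₂ := Real.rpow_lt_rpow hω.le hωM h2pos
  have hlt1 : ω ^ β₁ < M ^ β₁ := Real.rpow_lt_rpow hω.le hωM h1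
  rw [key]
  nlinarith [mul_pos (mul_pos hb hρ₂pos) (sub_pos.mpr hlt2),
    mul_pos (mul_pos hc hρ₁pos) (sub_pos.mpr hlt1)]
end

section
/- Let n ∈ ℕ, let c₁, …, c_n ≥ 0 with not all c_k equal (in particular max c_k > 0), let ψ₁, …, ψ_n ∈ (0, 2), let β₄ ∈ [2, 3] and d < 0. Define Q(s) = s^{β₄} − Σ_{k=1}^n c_k s^{ψ_k} − d. Then for every ω > 0, Im Q(ωi) < 0. -/
open Complex Real Finset

lemma im_cpow_mul_I (ω γ : ℝ) (hω : 0 < ω) :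
    (((ω:ℂ) * I) ^ (γ:ℂ)).im = ω ^ γ * Real.sin (γ * π / 2) := by
  have hne : (ω:ℂ) * I ≠ 0 := by
    simp [Complex.ext_iff, hω.ne']
  rw [Complex.cpow_def_of_ne_zero hne]
  have hlog : Complex.log ((ω:ℂ) * I) = Real.log ω + ((π/2 : ℝ) : ℂ) * I := by
    rw [Complex.log]
    have harg : Complex.arg ((ω:ℂ) * I) = π / 2 := by
      rw [← Complex.arg_I, Complex.arg_real_mul I hω]
    have habs : ‖(ω:ℂ) * I‖ = ω := by
      simp [abs_of_pos hω]
    rw [harg, habs]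
  rw [hlog]
  have : ((Real.log ω : ℂ) + ((π/2:ℝ) : ℂ) * I) * γ
      = ((γ * Real.log ω : ℝ) : ℂ) + ((γ * π / 2 : ℝ) : ℂ) * I := by
    push_cast; ring
  rw [this, Complex.exp_add, ← Complex.ofReal_exp, Complex.im_ofReal_mul,
    Complex.exp_ofReal_mul_I_im, Real.rpow_def_of_pos hω, mul_comm (Real.log ω)]

theorem stmt_16 (n : ℕ) (c ψ : Fin n → ℝ)
    (hc : ∀ k, 0 ≤ c k) (hne : ∃ j k, c j ≠ c k)
    (hψ : ∀ k, ψ k ∈ Set.Ioo (0:ℝ) 2)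
    (β₄ : ℝ) (hβ₄ : β₄ ∈ Set.Icc (2:ℝ) 3) (d : ℝ) (hd : d < 0)
    (Q : ℂ → ℂ)
    (hQ : ∀ s : ℂ, Q s = s ^ (β₄ : ℂ)
        - ∑ k : Fin n, (c k : ℂ) * s ^ ((ψ k : ℝ) : ℂ) - (d : ℂ)) :
    ∀ ω : ℝ, 0 < ω → (Q (ω * Complex.I)).im < 0 := by
  intro ω hω
  rw [hQ]
  simp only [Complex.sub_im, Complex.ofReal_im, sub_zero, Complex.im_sum]
  have hterm : ∀ k : Fin n,
      ((c k : ℂ) * ((ω:ℂ) * I) ^ ((ψ k : ℝ) : ℂ)).im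
        = c k * (ω ^ ψ k * Real.sin (ψ k * π / 2)) := by
    intro k
    rw [Complex.im_ofReal_mul, im_cpow_mul_I _ _ hω]
  rw [im_cpow_mul_I _ _ hω]
  -- first term is ≤ 0
  have h1 : ω ^ β₄ * Real.sin (β₄ * π / 2) ≤ 0 := by
    apply mul_nonpos_of_nonneg_of_nonpos (Real.rpow_nonneg hω.le _)
    have : Real.sin (β₄ * π / 2) = -Real.sin (β₄ * π / 2 - π) := by
      rw [Real.sin_sub_pi]; ring
    rw [this, neg_nonpos]
    apply Real.sin_nonneg_of_nonneg_of_le_pi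
    · nlinarith [hβ₄.1, Real.pi_pos]
    · nlinarith [hβ₄.2, Real.pi_pos]
  -- sum is > 0
  have hpos : ∀ k : Fin n, 0 ≤ c k * (ω ^ ψ k * Real.sin (ψ k * π / 2)) := by
    intro k
    apply mul_nonneg (hc k)
    apply mul_nonneg (Real.rpow_nonneg hω.le _)
    exact (Real.sin_pos_of_pos_of_lt_pi (by nlinarith [(hψ k).1, Real.pi_pos])
      (by nlinarith [(hψ k).2, Real.pi_pos])).le
  obtain ⟨j, k, hjk⟩ := hne
  have hk : ∃ k, 0 < c k := by
    rcases (hc j).lt_or_eq with h | h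
    · exact ⟨j, h⟩
    · refine ⟨k, lt_of_le_of_ne (hc k) ?_⟩
      intro h2; exact hjk (h.symm.trans h2)
  obtain ⟨m, hm⟩ := hk
  have hsum : 0 < ∑ k : Fin n, c k * (ω ^ ψ k * Real.sin (ψ k * π / 2)) := by
    apply Finset.sum_pos' (fun k _ => hpos k)
    refine ⟨m, Finset.mem_univ m, ?_⟩
    apply mul_pos hm
    apply mul_pos (Real.rpow_pos_of_pos hω _)
    exact Real.sin_pos_of_pos_of_lt_pi (by nlinarith [(hψ m).1, Real.pi_pos])
      (by nlinarith [(hψ m).2, Real.pi_pos])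
  calc ω ^ β₄ * Real.sin (β₄ * π / 2)
        - ∑ k : Fin n, ((c k : ℂ) * ((ω:ℂ) * I) ^ ((ψ k : ℝ) : ℂ)).im
      = ω ^ β₄ * Real.sin (β₄ * π / 2)
        - ∑ k : Fin n, c k * (ω ^ ψ k * Real.sin (ψ k * π / 2)) := by
        rw [Finset.sum_congr rfl (fun k _ => hterm k)]
    _ < 0 := by linarith
end

section
/- Let α₁, α₂, α₃ ∈ (0, 1] and let A be a real 3×3 matrix with det A > 0. Define Q : (0, ∞) → ℝ by Q(s) = det(diag(s^{α₁}, s^{α₂}, s^{α₃}) − A). Then Q has a zero in (0, ∞); i.e., the characteristic function of the fractional system has a positive real root. -/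
open Matrix Real Filter Asymptotics

private lemma rpow_isLittleO {β σ : ℝ} (h : β < σ) :
    (fun s : ℝ => s ^ β) =o[atTop] (fun s : ℝ => s ^ σ) := by
  rw [Asymptotics.isLittleO_iff_tendsto']
  · apply Tendsto.congr' _ (tendsto_rpow_neg_atTop (by linarith : 0 < σ - β))
    filter_upwards [eventually_gt_atTop (0:ℝ)] with x hx
    rw [neg_sub, Real.rpow_sub hx]
  · filter_upwards [eventually_gt_atTop (0:ℝ)] with x hx hgx
    exact absurd hgx (ne_of_gt (Real.rpow_pos_of_pos hx σ))

theorem stmt_17 (α₁ α₂ α₃ : ℝ) (hα₁ : α₁ ∈ Set.Ioc (0:ℝ) 1)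
    (hα₂ : α₂ ∈ Set.Ioc (0:ℝ) 1) (hα₃ : α₃ ∈ Set.Ioc (0:ℝ) 1)
    (A : Matrix (Fin 3) (Fin 3) ℝ) (hdet : 0 < A.det)
    (Q : ℝ → ℝ)
    (hQ : ∀ s : ℝ, 0 < s → Q s =
        (Matrix.diagonal ![s ^ α₁, s ^ α₂, s ^ α₃] - A).det) :
    ∃ s : ℝ, 0 < s ∧ Q s = 0 := by
  obtain ⟨h1, h1'⟩ := hα₁
  obtain ⟨h2, h2'⟩ := hα₂
  obtain ⟨h3, h3'⟩ := hα₃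
  set g : ℝ → ℝ := fun s => s ^ (α₁+α₂+α₃) - A 2 2 * s ^ (α₁+α₂)
      - A 1 1 * s ^ (α₁+α₃) - A 0 0 * s ^ (α₂+α₃)
      + (A 1 1 * A 2 2 - A 1 2 * A 2 1) * s ^ α₁
      + (A 0 0 * A 2 2 - A 0 2 * A 2 0) * s ^ α₂
      + (A 0 0 * A 1 1 - A 0 1 * A 1 0) * s ^ α₃ - A.det with hg
  have key : ∀ s : ℝ, 0 < s →
      (Matrix.diagonal ![s ^ α₁, s ^ α₂, s ^ α₃] - A).det = g s := by
    intro s hs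
    have e1 : s ^ (α₁+α₂+α₃) = s ^ α₁ * s ^ α₂ * s ^ α₃ := by
      rw [Real.rpow_add hs, Real.rpow_add hs]
    have e2 : s ^ (α₁+α₂) = s ^ α₁ * s ^ α₂ := Real.rpow_add hs _ _
    have e3 : s ^ (α₁+α₃) = s ^ α₁ * s ^ α₃ := Real.rpow_add hs _ _
    have e4 : s ^ (α₂+α₃) = s ^ α₂ * s ^ α₃ := Real.rpow_add hs _ _
    rw [hg]
    rw [Matrix.det_fin_three, Matrix.det_fin_three A]
    simp [Matrix.diagonal, Matrix.sub_apply]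
    rw [e1, e2, e3, e4]
    ring
  -- continuity of g
  have hcg : Continuous g := by
    have c : ∀ β : ℝ, 0 ≤ β → Continuous (fun s : ℝ => s ^ β) :=
      fun β hβ => Real.continuous_rpow_const hβ
    exact (((((((c _ (by positivity)).sub (continuous_const.mul (c _ (by positivity)))).sub
      (continuous_const.mul (c _ (by positivity)))).sub (continuous_const.mul (c _ (by positivity)))).add
      (continuous_const.mul (c _ (by positivity)))).add (continuous_const.mul (c _ (by positivity)))).add
      (continuous_const.mul (c _ (by positivity)))).sub continuous_const
  -- limit at 0 from the right
  have hg0 : Filter.Tendsto g (nhdsWithin 0 (Set.Ioi 0)) (nhds (-A.det)) := by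
    have := hcg.continuousAt (x := 0)
    have h0 : g 0 = -A.det := by
      simp [hg, Real.zero_rpow (by positivity : α₁+α₂+α₃ ≠ 0),
        Real.zero_rpow (by positivity : α₁+α₂ ≠ 0),
        Real.zero_rpow (by positivity : α₁+α₃ ≠ 0),
        Real.zero_rpow (by positivity : α₂+α₃ ≠ 0),
        Real.zero_rpow h1.ne', Real.zero_rpow h2.ne', Real.zero_rpow h3.ne']
    rw [← h0]
    exact (hcg.tendsto 0).mono_left nhdsWithin_le_nhds
  -- there is a point where g < 0
  obtain ⟨a, ha0, hga⟩ : ∃ a : ℝ, 0 < a ∧ g a < 0 := by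
    have hneg : ∀ᶠ s in nhdsWithin 0 (Set.Ioi 0), g s < 0 :=
      hg0.eventually_lt_const (by linarith)
    obtain ⟨a, hga, ha⟩ := (hneg.and self_mem_nhdsWithin).exists
    exact ⟨a, ha, hga⟩
  -- g tends to infinity
  have hgtop : Filter.Tendsto g Filter.atTop Filter.atTop := by
    have hequiv : g ~[atTop] (fun s : ℝ => s ^ (α₁+α₂+α₃)) := by
      have hσ : (0:ℝ) < α₁+α₂+α₃ := by linarith
      have hE : (fun s => g s - s ^ (α₁+α₂+α₃)) =o[atTop]
          (fun s : ℝ => s ^ (α₁+α₂+α₃)) := by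
        have hc : (fun _ : ℝ => (1:ℝ)) =o[atTop] (fun s : ℝ => s ^ (α₁+α₂+α₃)) := by
          have := rpow_isLittleO (β := 0) hσ
          simpa [Real.rpow_zero] using this
        have t12 := (rpow_isLittleO (β := α₁+α₂) (σ := α₁+α₂+α₃) (by linarith)).const_mul_left (-(A 2 2))
        have t13 := (rpow_isLittleO (β := α₁+α₃) (σ := α₁+α₂+α₃) (by linarith)).const_mul_left (-(A 1 1))
        have t23 := (rpow_isLittleO (β := α₂+α₃) (σ := α₁+α₂+α₃) (by linarith)).const_mul_left (-(A 0 0))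
        have t1 := (rpow_isLittleO (β := α₁) (σ := α₁+α₂+α₃) (by linarith)).const_mul_left
          (A 1 1 * A 2 2 - A 1 2 * A 2 1)
        have t2 := (rpow_isLittleO (β := α₂) (σ := α₁+α₂+α₃) (by linarith)).const_mul_left
          (A 0 0 * A 2 2 - A 0 2 * A 2 0)
        have t3 := (rpow_isLittleO (β := α₃) (σ := α₁+α₂+α₃) (by linarith)).const_mul_left
          (A 0 0 * A 1 1 - A 0 1 * A 1 0)
        have tc := hc.const_mul_left (-A.det)
        have := ((((((t12.add t13).add t23).add t1).add t2).add t3).add tc)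
        apply this.congr_left
        intro s
        simp [hg]; ring
      exact hE
    exact (hequiv.tendsto_atTop_iff).mpr (tendsto_rpow_atTop (by linarith))
  -- a point where g > 0, beyond a
  obtain ⟨b, hab, hgb⟩ : ∃ b : ℝ, a < b ∧ 0 < g b := by
    obtain ⟨b, hb1, hb2⟩ := ((hgtop.eventually_gt_atTop 0).and
      (eventually_gt_atTop a)).exists
    exact ⟨b, hb2, hb1⟩
  -- IVT
  obtain ⟨c, hc, hgc⟩ : ∃ c ∈ Set.Icc a b, g c = 0 := by
    have := intermediate_value_Icc hab.le (hcg.continuousOn (s := Set.Icc a b))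
    have h0mem : (0:ℝ) ∈ Set.Icc (g a) (g b) := ⟨hga.le, hgb.le⟩
    obtain ⟨c, hc, hgc⟩ := this h0mem
    exact ⟨c, hc, hgc⟩
  have hc0 : 0 < c := lt_of_lt_of_le ha0 hc.1
  refine ⟨c, hc0, ?_⟩
  rw [hQ c hc0, key c hc0, hgc]
end
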